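/- Let λ ∈ ℝ with −1 ≤ λ < 1 and γ ∈ (0,2) with 2γλ − λ + 1 > 0. Then both roots of the quadratic z² − γλ z + (γ−1)λ = 0 have modulus strictly less than 1. -/

import Mathlib

theorem stmt_3 (lam γ : ℝ) (hlam : -1 ≤ lam) (hlam' : lam < 1)
    (hγ : 0 < γ) (hγ' : γ < 2) (hcrit : 2 * γ * lam - lam + 1 > 0)
    (z : ℂ) (hz : z ^ 2 - (γ : ℂ) * (lam : ℂ) * z + ((γ : ℂ) - 1) * (lam : ℂ) = 0) :
    ‖z‖ < 1 := by
  set x := z.re with hx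
  set y := z.im with hy
  have h1 : x ^ 2 - y ^ 2 - γ * lam * x + (γ - 1) * lam = 0 := by
    have := congrArg Complex.re hz
    simp [Complex.mul_re, Complex.sub_re, Complex.add_re, pow_two] at this
    linarith [this]
  have h2 : y * (2 * x - γ * lam) = 0 := by
    have := congrArg Complex.im hz
    simp [Complex.mul_im, Complex.sub_im, Complex.add_im, pow_two] at this
    ring_nf
    ring_nf at this
    linarith [this]
  have hsq : ‖z‖ ^ 2 = x ^ 2 + y ^ 2 := by
    rw [Complex.sq_norm, Complex.normSq_apply]; ring
  have key : x ^ 2 + y ^ 2 < 1 := by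
    rcases mul_eq_zero.mp h2 with h | h
    · -- z real
      rw [h]
      have h1' : x ^ 2 - γ * lam * x + (γ - 1) * lam = 0 := by
        rw [h] at h1; linarith
      have hgl : γ * lam < 2 := by nlinarith
      have hgl' : -2 < γ * lam := by nlinarith
      have hA : x - 1 < 0 := by
        by_contra hc
        push_neg at hc
        nlinarith [mul_nonneg (by linarith : (0:ℝ) ≤ x - 1) (by nlinarith : (0:ℝ) ≤ x + 1 - γ * lam)]
      have hB : 0 < x + 1 := by
        by_contra hc
        push_neg at hc
        nlinarith [mul_nonneg (by linarith : (0:ℝ) ≤ 1 - (x + 1)) (by nlinarith : (0:ℝ) ≤ γ * lam + 1 - x)]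
      nlinarith [mul_pos hB (by linarith : (0:ℝ) < 1 - x)]
    · -- 2x = γ lam
      have hx2 : 2 * x = γ * lam := by linarith
      have hsum : x ^ 2 + y ^ 2 = (γ - 1) * lam := by nlinarith
      rw [hsum]
      nlinarith [mul_nonneg (by linarith : (0:ℝ) ≤ 2 - γ) (by linarith : (0:ℝ) ≤ 1 + lam),
        mul_pos hγ (by linarith : (0:ℝ) < 1 - lam)]
  nlinarith [norm_nonneg z, hsq]
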